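/- Let h : [0,1] → [0,1] be a Lebesgue-measure-preserving bijection. Define A_h(x,y) = λ({t ∈ [0,x] : h(t) ≤ y}), where λ is Lebesgue measure. Then A_h is a bivariate copula: A_h(x,0) = A_h(0,y) = 0, A_h(x,1) = x, A_h(1,y) = y, and A_h is 2-increasing. -/

import Mathlib

open MeasureTheory Set

/-- The completely dependent copula induced by a measure-preserving transformation
`h` of `[0,1]`:  `A_h(x,y) = λ({t ∈ [0,x] : h t ≤ y})`. -/
noncomputable def Ah (h : unitInterval → unitInterval) (x y : unitInterval) : ℝ :=
  (volume {t : unitInterval | t ≤ x ∧ h t ≤ y}).toReal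

lemma Ah.emb : MeasurableEmbedding ((↑) : unitInterval → ℝ) :=
  MeasurableEmbedding.subtype_coe measurableSet_Icc

lemma Ah.vol_Iic (x : unitInterval) :
    volume (Iic x) = ENNReal.ofReal (x : ℝ) := by
  rw [unitInterval.volume_def, Ah.emb.comap_apply]
  have : ((↑) : unitInterval → ℝ) '' Iic x = Set.Icc 0 (x : ℝ) := by
    ext r
    constructor
    · rintro ⟨t, ht, rfl⟩
      exact ⟨t.2.1, ht⟩
    · rintro ⟨h0, hx⟩
      exact ⟨⟨r, h0, hx.trans x.2.2⟩, hx, rfl⟩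
  rw [this, Real.volume_Icc, sub_zero]

lemma Ah.meas (h : unitInterval → unitInterval) (hm : Measurable h)
    (x y : unitInterval) : MeasurableSet {t : unitInterval | t ≤ x ∧ h t ≤ y} :=
  measurableSet_Iic.inter (hm measurableSet_Iic)

/-- If `h : [0,1] → [0,1]` is a Lebesgue-measure-preserving bijection, then
`A_h` is a bivariate copula: it has the right boundary behaviour and is 2-increasing. -/
theorem stmt_0 (h : unitInterval → unitInterval)
    (hbij : Function.Bijective h)
    (hmp : MeasurePreserving h volume volume) :
    (∀ x : unitInterval, Ah h x 0 = 0) ∧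
    (∀ y : unitInterval, Ah h 0 y = 0) ∧
    (∀ x : unitInterval, Ah h x 1 = (x : ℝ)) ∧
    (∀ y : unitInterval, Ah h 1 y = (y : ℝ)) ∧
    (∀ x₁ x₂ y₁ y₂ : unitInterval, x₁ ≤ x₂ → y₁ ≤ y₂ →
      0 ≤ Ah h x₂ y₂ - Ah h x₂ y₁ - Ah h x₁ y₂ + Ah h x₁ y₁) := by
  have hm := hmp.measurable
  refine ⟨?_, ?_, ?_, ?_, ?_⟩
  · intro x
    have hsub : {t : unitInterval | t ≤ x ∧ h t ≤ 0} ⊆ h ⁻¹' (Iic (0 : unitInterval)) :=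
      fun t ht => ht.2
    have h0 : volume (h ⁻¹' (Iic (0 : unitInterval))) = 0 := by
      rw [hmp.measure_preimage measurableSet_Iic.nullMeasurableSet, Ah.vol_Iic]
      simp
    have := measure_mono_null hsub h0
    simp only [Ah]
    rw [this, ENNReal.toReal_zero]
  · intro y
    have hsub : {t : unitInterval | t ≤ 0 ∧ h t ≤ y} ⊆ Iic (0 : unitInterval) :=
      fun t ht => ht.1
    have h0 : volume (Iic (0 : unitInterval)) = 0 := by
      rw [Ah.vol_Iic]; simp
    have := measure_mono_null hsub h0
    simp only [Ah]
    rw [this, ENNReal.toReal_zero]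
  · intro x
    have hset : {t : unitInterval | t ≤ x ∧ h t ≤ 1} = Iic x := by
      ext t
      exact ⟨fun ht => ht.1, fun ht => ⟨ht, unitInterval.le_one _⟩⟩
    rw [Ah, hset, Ah.vol_Iic, ENNReal.toReal_ofReal x.2.1]
  · intro y
    have hset : {t : unitInterval | t ≤ 1 ∧ h t ≤ y} = h ⁻¹' (Iic y) := by
      ext t
      exact ⟨fun ht => ht.2, fun ht => ⟨unitInterval.le_one _, ht⟩⟩
    rw [Ah, hset, hmp.measure_preimage measurableSet_Iic.nullMeasurableSet, Ah.vol_Iic,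
      ENNReal.toReal_ofReal y.2.1]
  · intro x₁ x₂ y₁ y₂ hx hy
    set S : unitInterval → unitInterval → Set unitInterval :=
      fun x y => {t : unitInterval | t ≤ x ∧ h t ≤ y} with hS
    have key : volume (S x₂ y₁) + volume (S x₁ y₂) ≤
        volume (S x₂ y₂) + volume (S x₁ y₁) := by
      have hunion : S x₂ y₁ ∪ S x₁ y₂ ⊆ S x₂ y₂ := by
        rintro t (⟨h1, h2⟩ | ⟨h1, h2⟩)
        · exact ⟨h1, h2.trans hy⟩
        · exact ⟨h1.trans hx, h2⟩
      have hinter : S x₂ y₁ ∩ S x₁ y₂ = S x₁ y₁ := by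
        ext t
        constructor
        · rintro ⟨⟨_, h2⟩, ⟨h3, _⟩⟩
          exact ⟨h3, h2⟩
        · rintro ⟨h1, h2⟩
          exact ⟨⟨h1.trans hx, h2⟩, ⟨h1, h2.trans hy⟩⟩
      calc volume (S x₂ y₁) + volume (S x₁ y₂)
          = volume (S x₂ y₁ ∪ S x₁ y₂) + volume (S x₂ y₁ ∩ S x₁ y₂) :=
            (measure_union_add_inter _ (Ah.meas h hm x₁ y₂)).symm
        _ ≤ volume (S x₂ y₂) + volume (S x₁ y₁) := by
            rw [hinter]
            exact add_le_add_left (measure_mono hunion) _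
    have hfin : ∀ x y, volume (S x y) ≠ ⊤ := fun x y => measure_ne_top _ _
    have := ENNReal.toReal_le_toReal (a := volume (S x₂ y₁) + volume (S x₁ y₂))
      (by simp [ENNReal.add_ne_top, hfin]) (by simp [ENNReal.add_ne_top, hfin]) |>.mpr key
    rw [ENNReal.toReal_add (hfin _ _) (hfin _ _), ENNReal.toReal_add (hfin _ _) (hfin _ _)]
      at this
    simp only [Ah]
    linarith
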